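/- Let σ, ω, ϑ be integers with σ, ϑ not divisible by 3, η ≥ 1, and suppose 3 does not divide 2σ − ω. Define m(x,y) = (1/3)(1 + e^{2πi σ x} + e^{2πi (ω x + 3^η ϑ y)}). Then there exists i ∈ {1,2} such that for all integers ℓ1, ℓ2 not divisible by 3 satisfying ℓ1 ≡ ℓ2 (mod 3) if i=1 (respectively ℓ1 ≢ ℓ2 (mod 3) if i=2), the point (ℓ1/3, ℓ2/3^{η+1}) is a zero of m. -/

import Mathlib

open Complex Real

set_option maxHeartbeats 1000000 in
set_option synthInstance.maxHeartbeats 400000 in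
set_option synthInstance.maxSize 2048 in
lemma zmod3_choice (s w t : ZMod 3) (hs : s ≠ 0) (ht : t ≠ 0) (h2 : 2*s - w ≠ 0) :
    (∀ l1 l2 : ZMod 3, l1 ≠ 0 → l2 ≠ 0 → l1 = l2 →
      s*l1 ≠ 0 ∧ w*l1 + t*l2 ≠ 0 ∧ s*l1 - (w*l1 + t*l2) ≠ 0) ∨
    (∀ l1 l2 : ZMod 3, l1 ≠ 0 → l2 ≠ 0 → l1 ≠ l2 →
      s*l1 ≠ 0 ∧ w*l1 + t*l2 ≠ 0 ∧ s*l1 - (w*l1 + t*l2) ≠ 0) := by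
  revert hs ht h2; revert s w t; decide

lemma cube_root_sum_key (a b : ℤ) (ha : a % 3 ≠ 0) (hb : b % 3 ≠ 0)
    (hab : (a - b) % 3 ≠ 0) :
    (1:ℂ) + Complex.exp (2 * Real.pi * Complex.I * a / 3)
      + Complex.exp (2 * Real.pi * Complex.I * b / 3) = 0 := by
  set ζ : ℂ := Complex.exp (2 * ↑Real.pi * Complex.I / 3) with hζdef
  have hprim : IsPrimitiveRoot ζ 3 := Complex.isPrimitiveRoot_exp 3 (by norm_num)
  have hζ3 : ζ ^ 3 = 1 := hprim.pow_eq_one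
  have hζne : ζ ≠ 1 := hprim.ne_one (by norm_num)
  have hζ0 : ζ ≠ 0 := Complex.exp_ne_zero _
  have hsum : 1 + ζ + ζ ^ 2 = 0 := by
    have h : (ζ - 1) * (1 + ζ + ζ ^ 2) = ζ ^ 3 - 1 := by ring
    rw [hζ3, sub_self] at h
    rcases mul_eq_zero.mp h with h' | h'
    · exact absurd (sub_eq_zero.mp h') hζne
    · exact h'
  have hz : ∀ k : ℤ, ζ ^ (3 * k) = 1 := by
    intro k
    rw [zpow_mul, show ((3:ℤ)) = ((3:ℕ):ℤ) from rfl, zpow_natCast, hζ3, one_zpow]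
  have hexp : ∀ n : ℤ, Complex.exp (2 * Real.pi * Complex.I * n / 3)
      = ζ ^ (n % 3).toNat := by
    intro n
    have h1 : Complex.exp (2 * Real.pi * Complex.I * n / 3) = ζ ^ n := by
      rw [← Complex.exp_int_mul]
      congr 1
      push_cast
      ring
    have h2 : ζ ^ n = ζ ^ (n % 3) := by
      conv_lhs => rw [← Int.mul_ediv_add_emod n 3]
      rw [zpow_add₀ hζ0, hz, one_mul]
    rw [h1, h2, ← zpow_natCast, Int.toNat_of_nonneg (Int.emod_nonneg n (by norm_num))]
  rw [hexp a, hexp b]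
  have ha' : a % 3 = 1 ∨ a % 3 = 2 := by omega
  have hb' : b % 3 = 1 ∨ b % 3 = 2 := by omega
  rcases ha' with h1 | h1 <;> rcases hb' with h2 | h2
  · omega
  · rw [h1, h2]
    show (1:ℂ) + ζ ^ (1:ℕ) + ζ ^ (2:ℕ) = 0
    linear_combination hsum
  · rw [h1, h2]
    show (1:ℂ) + ζ ^ (2:ℕ) + ζ ^ (1:ℕ) = 0
    linear_combination hsum
  · omega

lemma cast_ne_iff (n : ℤ) : (n : ZMod 3) ≠ 0 ↔ n % 3 ≠ 0 := by
  rw [Ne, Ne, ZMod.intCast_zmod_eq_zero_iff_dvd, Int.dvd_iff_emod_eq_zero]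
  norm_num

theorem stmt_7 (σ ω ϑ : ℤ) (η : ℕ) (hη : 1 ≤ η)
    (hσ3 : ¬ (3 : ℤ) ∣ σ) (hϑ3 : ¬ (3 : ℤ) ∣ ϑ)
    (hdiv : ¬ (3 : ℤ) ∣ 2 * σ - ω)
    (m : ℝ → ℝ → ℂ)
    (hm : ∀ x y : ℝ, m x y = (1/3) * (1 + Complex.exp (2 * Real.pi * Complex.I * (σ * x))
      + Complex.exp (2 * Real.pi * Complex.I * (ω * x + 3 ^ η * ϑ * y)))) :
    (∀ ℓ1 ℓ2 : ℤ, ¬ (3 : ℤ) ∣ ℓ1 → ¬ (3 : ℤ) ∣ ℓ2 → ℓ1 % 3 = ℓ2 % 3 →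
      m ((ℓ1 : ℝ) / 3) ((ℓ2 : ℝ) / 3 ^ (η + 1)) = 0) ∨
    (∀ ℓ1 ℓ2 : ℤ, ¬ (3 : ℤ) ∣ ℓ1 → ¬ (3 : ℤ) ∣ ℓ2 → ℓ1 % 3 ≠ ℓ2 % 3 →
      m ((ℓ1 : ℝ) / 3) ((ℓ2 : ℝ) / 3 ^ (η + 1)) = 0) := by
  have hs : (σ : ZMod 3) ≠ 0 := by
    rwa [Ne, ZMod.intCast_zmod_eq_zero_iff_dvd]
  have ht : (ϑ : ZMod 3) ≠ 0 := by
    rwa [Ne, ZMod.intCast_zmod_eq_zero_iff_dvd]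
  have h2 : 2 * (σ : ZMod 3) - (ω : ZMod 3) ≠ 0 := by
    have h2' : ((2 * σ - ω : ℤ) : ZMod 3) ≠ 0 := by
      rwa [Ne, ZMod.intCast_zmod_eq_zero_iff_dvd]
    push_cast at h2'
    exact h2'
  -- main computation, common to both branches
  have main : ∀ ℓ1 ℓ2 : ℤ,
      ((σ : ZMod 3) * ℓ1 ≠ 0 ∧ (ω : ZMod 3) * ℓ1 + ϑ * ℓ2 ≠ 0 ∧
        (σ : ZMod 3) * ℓ1 - ((ω : ZMod 3) * ℓ1 + ϑ * ℓ2) ≠ 0) →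
      m ((ℓ1 : ℝ) / 3) ((ℓ2 : ℝ) / 3 ^ (η + 1)) = 0 := by
    intro ℓ1 ℓ2 ⟨c1, c2, c3⟩
    rw [hm]
    push_cast
    have e1 : 2 * (Real.pi : ℂ) * Complex.I * ((σ : ℂ) * ((ℓ1 : ℂ) / 3))
        = 2 * Real.pi * Complex.I * ((σ * ℓ1 : ℤ) : ℂ) / 3 := by
      push_cast; ring
    have h3pow : ((3:ℂ) ^ η) ≠ 0 := pow_ne_zero _ (by norm_num)
    have e2 : 2 * (Real.pi : ℂ) * Complex.I * ((ω : ℂ) * ((ℓ1 : ℂ) / 3)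
          + (3:ℂ) ^ η * (ϑ : ℂ) * ((ℓ2 : ℂ) / 3 ^ (η + 1)))
        = 2 * Real.pi * Complex.I * ((ω * ℓ1 + ϑ * ℓ2 : ℤ) : ℂ) / 3 := by
      push_cast
      rw [pow_succ]
      field_simp
    have key := cube_root_sum_key (σ * ℓ1) (ω * ℓ1 + ϑ * ℓ2)
      (by rw [← cast_ne_iff]; push_cast; exact c1)
      (by rw [← cast_ne_iff]; push_cast; exact c2)
      (by rw [← cast_ne_iff]; push_cast; ring_nf; ring_nf at c3; exact c3)
    rw [e1, e2, key, mul_zero]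
  rcases zmod3_choice (σ : ZMod 3) (ω : ZMod 3) (ϑ : ZMod 3) hs ht h2 with H | H
  · left
    intro ℓ1 ℓ2 h1 h2' h3
    have hl1 : (ℓ1 : ZMod 3) ≠ 0 := by rwa [Ne, ZMod.intCast_zmod_eq_zero_iff_dvd]
    have hl2 : (ℓ2 : ZMod 3) ≠ 0 := by rwa [Ne, ZMod.intCast_zmod_eq_zero_iff_dvd]
    have heq : (ℓ1 : ZMod 3) = (ℓ2 : ZMod 3) := by
      rw [ZMod.intCast_eq_intCast_iff]
      exact h3
    exact main ℓ1 ℓ2 (H _ _ hl1 hl2 heq)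
  · right
    intro ℓ1 ℓ2 h1 h2' h3
    have hl1 : (ℓ1 : ZMod 3) ≠ 0 := by rwa [Ne, ZMod.intCast_zmod_eq_zero_iff_dvd]
    have hl2 : (ℓ2 : ZMod 3) ≠ 0 := by rwa [Ne, ZMod.intCast_zmod_eq_zero_iff_dvd]
    have hne : (ℓ1 : ZMod 3) ≠ (ℓ2 : ZMod 3) := by
      rw [Ne, ZMod.intCast_eq_intCast_iff]
      exact h3
    exact main ℓ1 ℓ2 (H _ _ hl1 hl2 hne)
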